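/- For n, k ∈ ℕ₀ set B_n(k) = [b_{n+k+1} − P_1(1−q^n)] · q^k / c_{n+k+1}. Then: (i) B_n(k) > (1 − 2q^{k+1})/q for all n, k ∈ ℕ₀; (ii) in particular, if K is the least natural number with q^{K+1} ≤ 1/4, then B_n(k) > 1/(2q) for all n ∈ ℕ₀ and all k ≥ K; and (iii) for every n ∈ ℕ₀, lim_{k→∞} B_n(k) = 1/q. -/
import Mathlib


open scoped BigOperators

/-- Recurrence coefficient `a_n` of the little q-Legendre polynomials. -/
noncomputable def aC (q : ℝ) : ℕ → ℝ
  | 0 => 1 / (q + 1)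
  | n + 1 => q ^ (n + 1) * (1 + q) * (1 - q ^ (n + 2)) /
      ((1 - q ^ (2 * n + 3)) * (1 + q ^ (n + 2)))

/-- Recurrence coefficient `c_n` of the little q-Legendre polynomials. -/
noncomputable def cC (q : ℝ) : ℕ → ℝ
  | 0 => 0
  | n + 1 => q ^ (n + 1) * (1 + q) * (1 - q ^ (n + 1)) /
      ((1 - q ^ (2 * n + 3)) * (1 + q ^ (n + 1)))

/-- Recurrence coefficient `b_n = 1 - a_n - c_n`. -/
noncomputable def bC (q : ℝ) (n : ℕ) : ℝ := 1 - aC q n - cC q n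

/-- The little q-Legendre polynomials, as functions `ℝ → ℝ`:
`P 0 x = 1`, `P 1 x = (q+1)x - q`, and
`P 1 x * P (n+1) x = a_{n+1} P (n+2) x + b_{n+1} P (n+1) x + c_{n+1} P n x`. -/
noncomputable def P (q : ℝ) : ℕ → ℝ → ℝ
  | 0, _ => 1
  | 1, x => (q + 1) * x - q
  | n + 2, x =>
      (((q + 1) * x - q) * P q (n + 1) x - bC q (n + 1) * P q (n + 1) x
        - cC q (n + 1) * P q n x) / aC q (n + 1)

/-- Haar weights of the little q-Legendre hypergroup. -/
noncomputable def haar (q : ℝ) (n : ℕ) : ℝ := (1 - q ^ (2 * n + 1)) / (q ^ n * (1 - q))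

/-- Finite q-Pochhammer symbol `(a;q)_m`. -/
noncomputable def qpoch (q A : ℝ) (m : ℕ) : ℝ := ∏ j ∈ Finset.range m, (1 - A * q ^ j)

/-- Infinite q-Pochhammer symbol `(a;q)_∞`. -/
noncomputable def qpochInf (q A : ℝ) : ℝ := ∏' j : ℕ, (1 - A * q ^ j)

/-- with `B_n(k) = [b_{n+k+1} - P₁(1-qⁿ)] qᵏ / c_{n+k+1}`:
(i) `B_n(k) > (1-2q^{k+1})/q` for all `n, k`; (ii) `B_n(k) > 1/(2q)` for `k ≥ K`;
(iii) `B_n(k) → 1/q` as `k → ∞`. -/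
noncomputable def Bfun (q s t : ℝ) : ℝ :=
  (1 - q^3*s^2*t^2) * (1 + q*s*t) / (q * (1 - q*s*t))
    - t * ((1 - q^2*s*t) * (1 + q*s*t) / ((1 + q^2*s*t) * (1 - q*s*t)) + 1)

lemma closedForm (q : ℝ) (hq0 : 0 < q) (hq1 : q < 1) (n k : ℕ) :
    (bC q (n + k + 1) - P q 1 (1 - q ^ n)) * q ^ k / cC q (n + k + 1)
      = Bfun q (q ^ n) (q ^ k) := by
  have hs0 : 0 < q ^ n := pow_pos hq0 n
  have ht0 : 0 < q ^ k := pow_pos hq0 k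
  have hs1 : q ^ n ≤ 1 := pow_le_one₀ hq0.le hq1.le
  have ht1 : q ^ k ≤ 1 := pow_le_one₀ hq0.le hq1.le
  have hst : q ^ n * q ^ k ≤ 1 := mul_le_one₀ hs1 ht0.le ht1
  have hQ1 : q * q ^ n * q ^ k < 1 := by nlinarith
  have hQ0 : 0 < q * q ^ n * q ^ k := by positivity
  have h1 : (1 : ℝ) - q * q ^ n * q ^ k ≠ 0 := by nlinarith
  have h2 : (1 : ℝ) + q * q ^ n * q ^ k ≠ 0 := by nlinarith
  have h3 : (1 : ℝ) + q ^ 2 * q ^ n * q ^ k ≠ 0 := by nlinarith [sq_nonneg q, pow_pos hq0 2]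
  have h4 : (1 : ℝ) - q ^ 3 * (q ^ n) ^ 2 * (q ^ k) ^ 2 ≠ 0 := by
    nlinarith [mul_pos (mul_pos hQ0 hQ0) hq0, sq_nonneg (q * q^n * q^k)]
  have hq : q ≠ 0 := ne_of_gt hq0
  have h1q : (1 : ℝ) + q ≠ 0 := by positivity
  simp only [bC, aC, cC, P, Bfun]
  have e1 : q ^ (n + k + 1) = q * q ^ n * q ^ k := by ring
  have e2 : q ^ (n + k + 2) = q ^ 2 * q ^ n * q ^ k := by ring
  have e3 : q ^ (2 * (n + k) + 3) = q ^ 3 * (q ^ n) ^ 2 * (q ^ k) ^ 2 := by ring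
  rw [e1, e2, e3]
  have hc : q * q ^ n * q ^ k * (1 + q) * (1 - q * q ^ n * q ^ k) ≠ 0 := by
    apply mul_ne_zero (mul_ne_zero (ne_of_gt hQ0) h1q) h1
  field_simp
  ring

lemma fpos (q s t : ℝ) (hq0 : 0 < q) (hq1 : q < 1) (hs0 : 0 < s) (hs1 : s ≤ 1)
    (ht0 : 0 < t) (ht1 : t ≤ 1) :
    0 < 2 - 2*q*t + 2*q^2*t + q^2*s*t - q^3*s^2*t^2 - q^4*s^2*t^2 - q^5*s^3*t^3 := by
  have hst : 0 < s * t := mul_pos hs0 ht0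
  have hst1 : s * t ≤ 1 := mul_le_one₀ hs1 ht0.le ht1
  have hq3 : 0 < q^3 := by positivity
  have hqst2 : q^2 * (s*t) ≤ 1 := by nlinarith
  have key1 : q^3*(s*t)*(s*t) ≤ q^3*(s*t)*1 :=
    mul_le_mul_of_nonneg_left hst1 (by positivity)
  have b1 : q^3*s^2*t^2 ≤ q^3*s*t := by nlinarith [key1]
  have key2 : q*(q^3*(s*t)*(s*t)) ≤ 1*(q^3*(s*t)*(s*t)) :=
    mul_le_mul_of_nonneg_right hq1.le (by positivity)
  have b2 : q^4*s^2*t^2 ≤ q^3*s*t := by nlinarith [key1, key2]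
  have key3 : (q^2*(s*t))*(q^3*(s*t)*(s*t)) ≤ 1*(q^3*(s*t)*(s*t)) :=
    mul_le_mul_of_nonneg_right hqst2 (by positivity)
  have b3 : q^5*s^3*t^3 ≤ q^3*s*t := by nlinarith [key1, key3]
  have hqt : q * t < 1 := by nlinarith
  rcases le_or_gt (3*q) 1 with h | h
  · nlinarith [mul_pos (mul_pos (mul_pos hq0 hq0) hs0) ht0]
  · have key : q^2*t*(1-3*q) ≤ q^2*s*t*(1-3*q) := by
      nlinarith [mul_nonneg (mul_nonneg (by positivity : (0:ℝ) ≤ q^2*t)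
        (by linarith : (0:ℝ) ≤ 3*q - 1)) (by linarith : (0:ℝ) ≤ 1 - s)]
    have pos : 0 ≤ q*(2-3*q+3*q^2) := by nlinarith [sq_nonneg (3*q-2), sq_nonneg q]
    have ht' : t*(q*(2-3*q+3*q^2)) ≤ q*(2-3*q+3*q^2) := by nlinarith
    nlinarith [sq_nonneg q, mul_pos hq0 hq0]

lemma Bfun_gt (q s t : ℝ) (hq0 : 0 < q) (hq1 : q < 1) (hs0 : 0 < s) (hs1 : s ≤ 1)
    (ht0 : 0 < t) (ht1 : t ≤ 1) :
    Bfun q s t > (1 - 2*q*t)/q := by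
  have hst1 : s * t ≤ 1 := mul_le_one₀ hs1 ht0.le ht1
  have hQ0 : 0 < q * s * t := by positivity
  have hQ1 : q * s * t < 1 := by nlinarith
  have h1 : (0:ℝ) < 1 - q * s * t := by linarith
  have h2 : (0:ℝ) < 1 + q^2 * s * t := by positivity
  have key : Bfun q s t - (1 - 2*q*t)/q
      = q*s*t*(2 - 2*q*t + 2*q^2*t + q^2*s*t - q^3*s^2*t^2 - q^4*s^2*t^2 - q^5*s^3*t^3)
        / (q*(1 - q*s*t)*(1 + q^2*s*t)) := by
    unfold Bfun
    field_simp
    ring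
  have hf := fpos q s t hq0 hq1 hs0 hs1 ht0 ht1
  have hpos : 0 < q*s*t*(2 - 2*q*t + 2*q^2*t + q^2*s*t - q^3*s^2*t^2 - q^4*s^2*t^2 - q^5*s^3*t^3)
        / (q*(1 - q*s*t)*(1 + q^2*s*t)) := by positivity
  linarith [key ▸ hpos]

lemma Bfun_cont (q s : ℝ) (hq0 : 0 < q) :
    Filter.Tendsto (fun t : ℝ => Bfun q s t) (nhds 0) (nhds (1/q)) := by
  have hB0 : Bfun q s 0 = 1/q := by
    unfold Bfun
    norm_num
  have : ContinuousAt (fun t : ℝ => Bfun q s t) 0 := by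
    unfold Bfun
    apply ContinuousAt.sub
    · apply ContinuousAt.div (by fun_prop) (by fun_prop)
      norm_num
      exact hq0.ne'
    · apply ContinuousAt.mul continuousAt_id
      apply ContinuousAt.add _ continuousAt_const
      apply ContinuousAt.div (by fun_prop) (by fun_prop)
      norm_num
  simpa [hB0] using this.tendsto

theorem stmt8 (q : ℝ) (hq0 : 0 < q) (hq1 : q < 1) :
    (∀ n k : ℕ,
      (bC q (n + k + 1) - P q 1 (1 - q ^ n)) * q ^ k / cC q (n + k + 1) >
        (1 - 2 * q ^ (k + 1)) / q) ∧
    (∀ K : ℕ, q ^ (K + 1) ≤ 1 / 4 → (∀ m : ℕ, m < K → ¬ (q ^ (m + 1) ≤ 1 / 4)) →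
      ∀ n k : ℕ, K ≤ k →
        (bC q (n + k + 1) - P q 1 (1 - q ^ n)) * q ^ k / cC q (n + k + 1) > 1 / (2 * q)) ∧
    (∀ n : ℕ, Filter.Tendsto
      (fun k : ℕ => (bC q (n + k + 1) - P q 1 (1 - q ^ n)) * q ^ k / cC q (n + k + 1))
      Filter.atTop (nhds (1 / q))) := by
  have part1 : ∀ n k : ℕ,
      (bC q (n + k + 1) - P q 1 (1 - q ^ n)) * q ^ k / cC q (n + k + 1) >
        (1 - 2 * q ^ (k + 1)) / q := by
    intro n k
    rw [closedForm q hq0 hq1 n k]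
    have := Bfun_gt q (q ^ n) (q ^ k) hq0 hq1 (pow_pos hq0 n)
      (pow_le_one₀ hq0.le hq1.le) (pow_pos hq0 k) (pow_le_one₀ hq0.le hq1.le)
    rw [show (1 - 2 * q ^ (k + 1)) / q = (1 - 2 * q * q ^ k) / q by ring]
    exact this
  refine ⟨part1, ?_, ?_⟩
  · intro K hK _ n k hk
    have hmono : q ^ (k + 1) ≤ q ^ (K + 1) :=
      pow_le_pow_of_le_one hq0.le hq1.le (by omega)
    have h14 : q ^ (k + 1) ≤ 1 / 4 := le_trans hmono hK
    have hle : 1 / (2 * q) ≤ (1 - 2 * q ^ (k + 1)) / q := by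
      rw [div_le_div_iff₀ (by positivity) hq0]
      nlinarith
    exact lt_of_le_of_lt hle (part1 n k)
  · intro n
    have hpow : Filter.Tendsto (fun k : ℕ => q ^ k) Filter.atTop (nhds 0) :=
      tendsto_pow_atTop_nhds_zero_of_lt_one hq0.le hq1
    have := (Bfun_cont q (q ^ n) hq0).comp hpow
    refine this.congr fun k => ?_
    exact (closedForm q hq0 hq1 n k).symm
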